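/- For n ≥ 10, the Shameful (K_{n,n}, 2)-Inequality fails: P(K_{n,n}, 3)/3^{2n} < P(K_{n,n}, 2)/2^{2n}. -/

import Mathlib

def pia (a x : Fin 3) : Fin 2 := if x = a + 1 then 0 else 1

lemma pia_inj : ∀ a x y : Fin 3, x ≠ a → y ≠ a → pia a x = pia a y → x = y := by decide

lemma fin3_four' : ∀ x1 x2 y1 y2 : Fin 3, x1 = x2 ∨ y1 = y2 ∨ x1 = y1 ∨ x1 = y2 ∨
    x2 = y1 ∨ x2 = y2 := by decide

lemma fin3_four (x1 x2 y1 y2 : Fin 3) (h1 : x1 ≠ x2) (h2 : y1 ≠ y2) (h3 : x1 ≠ y1)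
    (h4 : x1 ≠ y2) (h5 : x2 ≠ y1) (h6 : x2 ≠ y2) : False := by
  rcases fin3_four' x1 x2 y1 y2 with h|h|h|h|h|h <;> tauto



open scoped Classical

/-- Number of proper `k`-colorings of `G` (the chromatic polynomial evaluated at `k`). -/
noncomputable def properCount {V : Type*} (G : SimpleGraph V) (k : ℕ) : ℕ :=
  Nat.card {f : V → Fin k // ∀ u v, G.Adj u v → f u ≠ f v}

/-- Number of proper `L`-colorings of `G` for a list assignment `L`. -/
noncomputable def listCount {V : Type*} (G : SimpleGraph V) (L : V → Finset ℕ) : ℕ :=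
  Nat.card {f : V → ℕ // (∀ v, f v ∈ L v) ∧ ∀ u v, G.Adj u v → f u ≠ f v}

/-- The list color function `P_ℓ(G, k)`. -/
noncomputable def listColorFn {V : Type*} (G : SimpleGraph V) (k : ℕ) : ℕ :=
  sInf {m | ∃ L : V → Finset ℕ, (∀ v, (L v).card = k) ∧ m = listCount G L}

/-- `H` (on vertex set `V × Fin k`, with `L v = {v} × Fin k`) is a `k`-fold DP-cover of `G`:
each part is a clique, cross-edges only between parts of adjacent vertices, and the
cross-edges between parts of adjacent vertices form a matching. -/
def IsDPCover {V : Type*} (G : SimpleGraph V) (k : ℕ) (H : SimpleGraph (V × Fin k)) : Prop :=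
  (∀ v : V, ∀ i j : Fin k, i ≠ j → H.Adj (v, i) (v, j)) ∧
  (∀ u v : V, ∀ i j : Fin k, H.Adj (u, i) (v, j) → u = v ∨ G.Adj u v) ∧
  (∀ u v : V, G.Adj u v →
    (∀ i j j' : Fin k, H.Adj (u, i) (v, j) → H.Adj (u, i) (v, j') → j = j') ∧
    (∀ i i' j : Fin k, H.Adj (u, i) (v, j) → H.Adj (u, i') (v, j) → i = i'))

/-- A full `k`-fold DP-cover: the matching between the parts of adjacent vertices is perfect. -/
def IsFullDPCover {V : Type*} (G : SimpleGraph V) (k : ℕ) (H : SimpleGraph (V × Fin k)) : Prop :=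
  IsDPCover G k H ∧ ∀ u v : V, G.Adj u v → ∀ i : Fin k, ∃! j : Fin k, H.Adj (u, i) (v, j)

/-- The number of `H`-colorings of `G` (independent sets of `H` with one vertex in each part,
encoded as functions `V → Fin k`). -/
noncomputable def dpCount {V : Type*} (k : ℕ) (H : SimpleGraph (V × Fin k)) : ℕ :=
  Nat.card {f : V → Fin k // ∀ u v : V, u ≠ v → ¬ H.Adj (u, f u) (v, f v)}

/-- The DP color function `P_DP(G, k)`. -/
noncomputable def dpColorFn {V : Type*} (G : SimpleGraph V) (k : ℕ) : ℕ :=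
  sInf {m | ∃ H : SimpleGraph (V × Fin k), IsDPCover G k H ∧ m = dpCount k H}

/-- The dual DP color function `P*_DP(G, k)`. -/
noncomputable def dualDPColorFn {V : Type*} (G : SimpleGraph V) (k : ℕ) : ℕ :=
  sSup {m | ∃ H : SimpleGraph (V × Fin k), IsFullDPCover G k H ∧ m = dpCount k H}

section aux

lemma pow_aux : ∀ n : ℕ, 10 ≤ n → 3 * 8 ^ n < 9 ^ n := by
  intro n hn
  induction n, hn using Nat.le_induction with
  | base => norm_num
  | succ n hn ih =>
    rw [pow_succ, pow_succ]
    calc 3 * (8 ^ n * 8) = (3 * 8 ^ n) * 8 := by ring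
    _ < 9 ^ n * 9 := by nlinarith [ih, pow_pos (by norm_num : 0 < (8:ℕ)) n]

end aux

lemma count3_le (n : ℕ) (hn : 0 < n) :
    properCount (completeBipartiteGraph (Fin n) (Fin n)) 3 ≤ 6 * 2 ^ n := by
  set G := completeBipartiteGraph (Fin n) (Fin n) with hG
  have hadj : ∀ a b : Fin n, G.Adj (Sum.inl a) (Sum.inr b) := by
    intro a b; simp [hG]
  set z : Fin n := ⟨0, hn⟩
  classical
  set C : Set ((Fin n ⊕ Fin n) → Fin 3) := {f | ∀ u v, G.Adj u v → f u ≠ f v} with hC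
  set A : Set ((Fin n ⊕ Fin n) → Fin 3) :=
    {f | f ∈ C ∧ ∀ a : Fin n, f (Sum.inl a) = f (Sum.inl z)} with hA
  set B : Set ((Fin n ⊕ Fin n) → Fin 3) :=
    {f | f ∈ C ∧ ∀ b : Fin n, f (Sum.inr b) = f (Sum.inr z)} with hB
  have hsub : C ⊆ A ∪ B := by
    intro f hf
    by_contra h
    rw [Set.mem_union, not_or] at h
    obtain ⟨hA', hB'⟩ := h
    simp only [hA, hB, Set.mem_setOf_eq, not_and] at hA' hB'
    obtain ⟨a, ha⟩ := not_forall.mp (hA' hf)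
    obtain ⟨b, hb⟩ := not_forall.mp (hB' hf)
    exact fin3_four (f (Sum.inl a)) (f (Sum.inl z)) (f (Sum.inr b)) (f (Sum.inr z))
      ha hb (hf _ _ (hadj a b)) (hf _ _ (hadj a z)) (hf _ _ (hadj z b)) (hf _ _ (hadj z z))
  -- injection for A
  have cardA : Nat.card A ≤ 3 * 2 ^ n := by
    have : Function.Injective (fun f : A =>
        ((f.1 (Sum.inl z), fun i => pia (f.1 (Sum.inl z)) (f.1 (Sum.inr i))) :
          Fin 3 × (Fin n → Fin 2))) := by
      rintro ⟨f, hfC, hfc⟩ ⟨g, hgC, hgc⟩ hfg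
      simp only [Prod.mk.injEq] at hfg
      obtain ⟨h1, h2⟩ := hfg
      have h2' := congrFun h2
      refine Subtype.ext (funext fun u => ?_)
      show f u = g u
      cases u with
      | inl a => rw [hfc a, hgc a, h1]
      | inr b =>
        refine pia_inj (f (Sum.inl z)) _ _ ?_ ?_ ?_
        · exact fun h => (hfC _ _ (hadj z b)) h.symm
        · rw [h1]; exact fun h => (hgC _ _ (hadj z b)) h.symm
        · have := h2' b; rw [h1] at this ⊢; exact this
    calc Nat.card A ≤ Nat.card (Fin 3 × (Fin n → Fin 2)) :=
          Nat.card_le_card_of_injective _ this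
      _ = 3 * 2 ^ n := by simp [Nat.card_eq_fintype_card]
  have cardB : Nat.card B ≤ 3 * 2 ^ n := by
    have : Function.Injective (fun f : B =>
        ((f.1 (Sum.inr z), fun i => pia (f.1 (Sum.inr z)) (f.1 (Sum.inl i))) :
          Fin 3 × (Fin n → Fin 2))) := by
      rintro ⟨f, hfC, hfc⟩ ⟨g, hgC, hgc⟩ hfg
      simp only [Prod.mk.injEq] at hfg
      obtain ⟨h1, h2⟩ := hfg
      have h2' := congrFun h2
      refine Subtype.ext (funext fun u => ?_)
      show f u = g u
      cases u with
      | inr a => rw [hfc a, hgc a, h1]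
      | inl b =>
        refine pia_inj (f (Sum.inr z)) _ _ ?_ ?_ ?_
        · exact fun h => (hfC _ _ (hadj b z)) h
        · rw [h1]; exact fun h => (hgC _ _ (hadj b z)) h
        · have := h2' b; rw [h1] at this ⊢; exact this
    calc Nat.card B ≤ Nat.card (Fin 3 × (Fin n → Fin 2)) :=
          Nat.card_le_card_of_injective _ this
      _ = 3 * 2 ^ n := by simp [Nat.card_eq_fintype_card]
  have : properCount G 3 = Nat.card C := rfl
  rw [this]
  calc Nat.card C ≤ Nat.card ↥(A ∪ B) := Nat.card_mono (Set.toFinite _) hsub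
    _ ≤ Nat.card A + Nat.card B := Set.card_union_le A B
    _ ≤ 3 * 2 ^ n + 3 * 2 ^ n := Nat.add_le_add cardA cardB
    _ = 6 * 2 ^ n := by ring

lemma count2_ge (n : ℕ) (hn : 0 < n) :
    2 ≤ properCount (completeBipartiteGraph (Fin n) (Fin n)) 2 := by
  set G := completeBipartiteGraph (Fin n) (Fin n) with hG
  have hA : ∀ u v : Fin n ⊕ Fin n, G.Adj u v →
      (u.isLeft ∧ v.isRight ∨ u.isRight ∧ v.isLeft) := fun u v h => h
  let f0 : {f : (Fin n ⊕ Fin n) → Fin 2 // ∀ u v, G.Adj u v → f u ≠ f v} :=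
    ⟨Sum.elim (fun _ => 0) (fun _ => 1), by
      intro u v h
      rcases hA u v h with ⟨h1, h2⟩ | ⟨h1, h2⟩ <;> cases u <;> cases v <;> simp_all⟩
  let f1 : {f : (Fin n ⊕ Fin n) → Fin 2 // ∀ u v, G.Adj u v → f u ≠ f v} :=
    ⟨Sum.elim (fun _ => 1) (fun _ => 0), by
      intro u v h
      rcases hA u v h with ⟨h1, h2⟩ | ⟨h1, h2⟩ <;> cases u <;> cases v <;> simp_all⟩
  have hne : f0 ≠ f1 := by
    intro h
    have := congrFun (congrArg Subtype.val h) (Sum.inl (⟨0, hn⟩ : Fin n))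
    simp [f0, f1] at this
  have : Nontrivial {f : (Fin n ⊕ Fin n) → Fin 2 // ∀ u v, G.Adj u v → f u ≠ f v} :=
    ⟨⟨f0, f1, hne⟩⟩
  exact Finite.one_lt_card_iff_nontrivial.mpr this

theorem stmt11 (n : ℕ) (hn : 10 ≤ n) :
    (properCount (completeBipartiteGraph (Fin n) (Fin n)) 3 : ℝ) / 3 ^ (2 * n) <
      (properCount (completeBipartiteGraph (Fin n) (Fin n)) 2 : ℝ) / 2 ^ (2 * n) := by
  have hn0 : 0 < n := by omega
  have h3 := count3_le n hn0
  have h2 := count2_ge n hn0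
  have hp := pow_aux n hn
  set P3 := properCount (completeBipartiteGraph (Fin n) (Fin n)) 3
  set P2 := properCount (completeBipartiteGraph (Fin n) (Fin n)) 2
  have h3' : (P3 : ℝ) ≤ 6 * 2 ^ n := by exact_mod_cast h3
  have h2' : (2 : ℝ) ≤ P2 := by exact_mod_cast h2
  have hp' : (3 : ℝ) * 8 ^ n < 9 ^ n := by exact_mod_cast hp
  rw [div_lt_div_iff₀ (by positivity) (by positivity)]
  have e2 : (2 : ℝ) ^ (2 * n) = 4 ^ n := by
    rw [pow_mul]; norm_num
  have e3 : (3 : ℝ) ^ (2 * n) = 9 ^ n := by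
    rw [pow_mul]; norm_num
  rw [e2, e3]
  have key : (6 : ℝ) * 2 ^ n * 4 ^ n = 6 * 8 ^ n := by
    rw [mul_assoc, ← mul_pow]; norm_num
  calc (P3 : ℝ) * 4 ^ n ≤ 6 * 2 ^ n * 4 ^ n := by
        have : (0:ℝ) < 4 ^ n := by positivity
        nlinarith
    _ = 2 * (3 * 8 ^ n) := by rw [key]; ring
    _ < 2 * 9 ^ n := by nlinarith
    _ ≤ (P2 : ℝ) * 9 ^ n := by
        have : (0:ℝ) < 9 ^ n := by positivity
        nlinarith
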